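/- arXiv:1507.01920 — 2 statements merged into one kernel-verified Lean document; each statement's English description precedes it below -/
import Mathlib

section
/- For all integers n > m ≥ 0, the exact identity n·p(n,m) = 1 + ∑_{m < k < n−m} p(k,m) holds, where the sum is over integers k with m < k < n − m. -/
open Polynomial

/-- Hypotheses characterizing Buchstab's function `ω`: continuous on `[1,∞)`,
`ω(u) = 1/u` on `[1,2]`, `(u·ω(u))' = ω(u-1)` for `u > 2`, and `ω(u) = 0` for `u < 1`. -/
def IsBuchstab (ω : ℝ → ℝ) : Prop :=
  ContinuousOn ω (Set.Ici 1) ∧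
  (∀ u : ℝ, 1 ≤ u → u ≤ 2 → ω u = 1 / u) ∧
  (∀ u : ℝ, 2 < u → HasDerivAt (fun t => t * ω t) (ω (u - 1)) u) ∧
  (∀ u : ℝ, u < 1 → ω u = 0)

/-- `κ` is the unique positive real with `1 = ∫₁^∞ ω(y)(y+1)^{-1-κ} dy`. -/
def IsKappa (ω : ℝ → ℝ) (κ : ℝ) : Prop :=
  0 < κ ∧ (∫ y in Set.Ioi (1 : ℝ), ω y * (y + 1) ^ (-1 - κ)) = 1

/-- The function `d` of the paper: `d(u) = 0` for `u < 0` and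
`d(u) = 1 - ∫₀^{(u-1)/2} d(v)/(v+1) · ω((u-v)/(v+1)) dv` for `u ≥ 0`. -/
def IsDFun (ω d : ℝ → ℝ) : Prop :=
  (∀ u : ℝ, u < 0 → d u = 0) ∧
  (∀ u : ℝ, 0 ≤ u →
    d u = 1 - ∫ v in (0 : ℝ)..((u - 1) / 2), d v / (v + 1) * ω ((u - v) / (v + 1)))

/-- `C = (1 - e^{-γ})⁻¹`. -/
noncomputable def constC : ℝ := (1 - Real.exp (-Real.eulerMascheroniConstant))⁻¹

/-- `H_m = ∑_{k=1}^m 1/k`. -/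
noncomputable def Hsum (m : ℕ) : ℝ := ∑ k ∈ Finset.Icc 1 m, (1 : ℝ) / k

/-- Proportion of monic polynomials of degree `n` over `F` with no non-constant
divisor of degree at most `m` ("m-rough"). -/
noncomputable def roughProportion (F : Type) [Field F] [Fintype F] (n m : ℕ) : ℝ :=
  (Nat.card {P : F[X] // P.Monic ∧ P.natDegree = n ∧
      ∀ D : F[X], D ∣ P → 1 ≤ D.natDegree → m < D.natDegree} : ℝ) /
    (Fintype.card F : ℝ) ^ n

/-- The set of degrees of monic divisors of `P`. -/
def degreeSet {F : Type} [Field F] (P : F[X]) : Set ℕ :=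
  {k | ∃ D : F[X], D.Monic ∧ D ∣ P ∧ D.natDegree = k}

/-- `A ⊆ [0,n]` has no gaps of size greater than `m`. -/
def NoGaps (n m : ℕ) (A : Set ℕ) : Prop :=
  ∀ a ∈ A, a < n → ∃ b ∈ A, a < b ∧ b ≤ a + m

/-- `f(n,m)`: proportion of monic polynomials of degree `n` over `F` whose set of
degrees of divisors has no gaps of size greater than `m`. -/
noncomputable def fProportion (F : Type) [Field F] [Fintype F] (n m : ℕ) : ℝ :=
  (Nat.card {P : F[X] // P.Monic ∧ P.natDegree = n ∧ NoGaps n m (degreeSet P)} : ℝ) /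
    (Fintype.card F : ℝ) ^ n

/-- `I_k`: the number of monic irreducible polynomials of degree `k` over `F`. -/
noncomputable def irreducibleCount (F : Type) [Field F] [Fintype F] (k : ℕ) : ℕ :=
  Nat.card {P : F[X] // P.Monic ∧ Irreducible P ∧ P.natDegree = k}

/-- `λ_q(m) = ∏_{k=1}^m (1 - q^{-k})^{I_k}`. -/
noncomputable def lambdaq (F : Type) [Field F] [Fintype F] (m : ℕ) : ℝ :=
  ∏ k ∈ Finset.Icc 1 m, (1 - ((Fintype.card F : ℝ))⁻¹ ^ k) ^ irreducibleCount F k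

/-- `p(n,m)`: proportion of permutations of `n` objects with no cycle of length at
most `m` (fixed points count as cycles of length 1; the cycle length of a point is
its minimal period). -/
noncomputable def pProportion (n m : ℕ) : ℝ :=
  (Nat.card {σ : Equiv.Perm (Fin n) // ∀ x : Fin n, m < Function.minimalPeriod ⇑σ x} : ℝ) /
    (n.factorial : ℝ)

/-- `A₃(σ)`: the set of sums of lengths of distinct cycles of `σ`, i.e. the set of
cardinalities of subsets `M` with `σ(M) = M`. -/
def sizesSet {n : ℕ} (σ : Equiv.Perm (Fin n)) : Set ℕ :=
  {k | ∃ M : Finset (Fin n), (∀ x ∈ M, σ x ∈ M) ∧ M.card = k}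

/-- `g(n,m)`: proportion of permutations `σ ∈ S_n` such that `A₃(σ)` has no gaps of
size greater than `m`. -/
noncomputable def gProportion (n m : ℕ) : ℝ :=
  (Nat.card {σ : Equiv.Perm (Fin n) // NoGaps n m (sizesSet σ)} : ℝ) / (n.factorial : ℝ)

open Equiv Function Finset

private def PermGood {r : ℕ} (m : ℕ) (σ : Equiv.Perm (Fin r)) : Prop :=
  ∀ x : Fin r, m < Function.minimalPeriod ⇑σ x

private noncomputable def NNc (m r : ℕ) : ℕ :=
  Nat.card {σ : Equiv.Perm (Fin r) // PermGood m σ}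

private lemma perm_mem_periodicPts {β : Type*} [Finite β] (σ : Equiv.Perm β) (x : β) :
    x ∈ Function.periodicPts ⇑σ := by
  refine ⟨orderOf σ, orderOf_pos σ, ?_⟩
  show (⇑σ)^[orderOf σ] x = x
  rw [← Equiv.Perm.coe_pow, pow_orderOf_eq_one]
  rfl

private lemma perm_minimalPeriod_pos {β : Type*} [Finite β] (σ : Equiv.Perm β) (x : β) :
    0 < Function.minimalPeriod ⇑σ x :=
  Function.minimalPeriod_pos_of_mem_periodicPts (perm_mem_periodicPts σ x)

private lemma perm_minimalPeriod_le (r : ℕ) (σ : Equiv.Perm (Fin r)) (x : Fin r) :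
    Function.minimalPeriod ⇑σ x ≤ r := by
  by_contra hlt
  push_neg at hlt
  have hinj : Function.Injective fun i : Fin (r + 1) => (⇑σ)^[i.val] x := by
    intro a b hab
    have := Function.iterate_injOn_Iio_minimalPeriod (f := ⇑σ) (x := x)
      (Set.mem_Iio.mpr (lt_of_le_of_lt (Nat.lt_succ_iff.mp a.isLt) hlt))
      (Set.mem_Iio.mpr (lt_of_le_of_lt (Nat.lt_succ_iff.mp b.isLt) hlt)) hab
    exact Fin.ext this
  have := Fintype.card_le_of_injective _ hinj
  simp at this

private lemma NNc_zero (m : ℕ) : NNc m 0 = 1 := by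
  rw [NNc, Nat.card_eq_one_iff_unique]
  refine ⟨⟨fun a b => Subtype.ext (Equiv.ext fun x => x.elim0)⟩, ⟨⟨1, fun x => x.elim0⟩⟩⟩

private lemma NNc_eq_zero (m k : ℕ) (h1 : 1 ≤ k) (h2 : k ≤ m) : NNc m k = 0 := by
  have : IsEmpty {σ : Equiv.Perm (Fin k) // PermGood m σ} := by
    refine ⟨fun s => ?_⟩
    obtain ⟨σ, hσ⟩ := s
    have h := hσ ⟨0, h1⟩
    have := perm_minimalPeriod_le k σ ⟨0, h1⟩
    omega
  simp [NNc, Nat.card_eq_zero, this]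

private lemma minimalPeriod_permCongr {β γ : Type*} (h : β ≃ γ) (σ : Equiv.Perm β) (x : β) :
    Function.minimalPeriod ⇑(h.permCongr σ) (h x) = Function.minimalPeriod ⇑σ x := by
  have key : ∀ k : ℕ, (⇑(h.permCongr σ))^[k] (h x) = h ((⇑σ)^[k] x) := by
    intro k; induction k with
    | zero => rfl
    | succ k ih =>
        rw [Function.iterate_succ_apply', Function.iterate_succ_apply', ih,
          Equiv.permCongr_apply, Equiv.symm_apply_apply]
  rw [Function.minimalPeriod_eq_minimalPeriod_iff]
  intro n
  simp only [Function.IsPeriodicPt, Function.IsFixedPt, key]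
  exact h.apply_eq_iff_eq

private lemma minimalPeriod_subtypePerm {β : Type*} {p : β → Prop} (σ : Equiv.Perm β)
    (hp : ∀ x, p x ↔ p (σ x)) (x : Subtype p) :
    Function.minimalPeriod ⇑(σ.subtypePerm (fun x => (hp x).symm)) x = Function.minimalPeriod ⇑σ (x : β) := by
  rw [Function.minimalPeriod_eq_minimalPeriod_iff]
  intro n
  simp only [Function.IsPeriodicPt, Function.IsFixedPt, Equiv.Perm.iterate_eq_pow,
    Equiv.Perm.subtypePerm_pow, Equiv.Perm.subtypePerm_apply]
  simp [Subtype.ext_iff]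

private lemma minimalPeriod_ofSubtype {β : Type*} {p : β → Prop} [DecidablePred p]
    (ρ : Equiv.Perm (Subtype p)) (w : Subtype p) :
    Function.minimalPeriod ⇑(Equiv.Perm.ofSubtype ρ) (w : β) = Function.minimalPeriod ⇑ρ w := by
  rw [Function.minimalPeriod_eq_minimalPeriod_iff]
  intro n
  simp only [Function.IsPeriodicPt, Function.IsFixedPt, Equiv.Perm.iterate_eq_pow,
    ← map_pow, Equiv.Perm.ofSubtype_apply_coe]
  exact Subtype.coe_inj

private lemma minimalPeriod_congr_iter {β : Type*} {f g : β → β} (x : β)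
    (hfg : ∀ k : ℕ, f^[k] x = g^[k] x) :
    Function.minimalPeriod f x = Function.minimalPeriod g x := by
  rw [Function.minimalPeriod_eq_minimalPeriod_iff]
  intro n
  simp only [Function.IsPeriodicPt, Function.IsFixedPt, hfg]

private lemma iterate_mul_left {β : Type*} (c t : Equiv.Perm β) (x : β)
    (hfix : ∀ k : ℕ, t ((⇑c)^[k] x) = (⇑c)^[k] x) :
    ∀ k : ℕ, (⇑(c * t))^[k] x = (⇑c)^[k] x := by
  intro k; induction k with
  | zero => rfl
  | succ k ih =>
      rw [Function.iterate_succ_apply', Function.iterate_succ_apply', ih,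
        Equiv.Perm.mul_apply, hfix k]

private lemma iterate_mul_right {β : Type*} (c t : Equiv.Perm β) (x : β)
    (hfix : ∀ k : ℕ, c ((⇑t)^[k] x) = (⇑t)^[k] x) :
    ∀ k : ℕ, (⇑(c * t))^[k] x = (⇑t)^[k] x := by
  intro k; induction k with
  | zero => rfl
  | succ k ih =>
      rw [Function.iterate_succ_apply', Function.iterate_succ_apply', ih,
        Equiv.Perm.mul_apply, ← Function.iterate_succ_apply' t]
      exact hfix (k + 1)

private lemma formPerm_minimalPeriod {β : Type*} [Fintype β] [DecidableEq β]
    (l : List β) (hl : l.Nodup) {x : β} (hx : x ∈ l) :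
    Function.minimalPeriod ⇑l.formPerm x = l.length := by
  obtain ⟨i, hi, rfl⟩ := List.mem_iff_getElem.mp hx
  have hlen : 0 < l.length := lt_of_le_of_lt (Nat.zero_le i) hi
  apply le_antisymm
  · apply Function.IsPeriodicPt.minimalPeriod_le hlen
    show (⇑l.formPerm)^[l.length] l[i] = l[i]
    rw [Equiv.Perm.iterate_eq_pow, List.formPerm_pow_apply_getElem l hl _ i hi]
    have hmod : (i + l.length) % l.length = i := by
      rw [Nat.add_mod_right, Nat.mod_eq_of_lt hi]
    simp only [hmod]
  · by_contra hcon
    push_neg at hcon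
    have hpos : 0 < Function.minimalPeriod ⇑l.formPerm l[i] := perm_minimalPeriod_pos _ _
    set d := Function.minimalPeriod ⇑l.formPerm l[i] with hd
    have hper : (⇑l.formPerm)^[d] l[i] = l[i] := Function.iterate_minimalPeriod
    rw [Equiv.Perm.iterate_eq_pow, List.formPerm_pow_apply_getElem l hl _ i hi] at hper
    have hidx : (i + d) % l.length = i := (List.Nodup.getElem_inj_iff hl).mp hper
    rcases Nat.lt_or_ge (i + d) l.length with hlt | hge
    · rw [Nat.mod_eq_of_lt hlt] at hidx; omega
    · have h2 : (i + d) % l.length = i + d - l.length := by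
        rw [Nat.mod_eq_sub_mod hge, Nat.mod_eq_of_lt (by omega)]
      omega

section Build

private def cycList (n j : ℕ) (hn : 0 < n)
    (e : Fin (j - 1) ↪ {x : Fin n // x ≠ ⟨0, hn⟩}) : List (Fin n) :=
  (⟨0, hn⟩ : Fin n) :: List.ofFn (fun i => ((e i : {x : Fin n // x ≠ ⟨0, hn⟩}) : Fin n))

private lemma cycList_length {n j : ℕ} (hn : 0 < n) (hj : 1 ≤ j)
    (e : Fin (j - 1) ↪ {x : Fin n // x ≠ ⟨0, hn⟩}) :
    (cycList n j hn e).length = j := by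
  simp [cycList]
  omega

private lemma cycList_nodup {n j : ℕ} (hn : 0 < n)
    (e : Fin (j - 1) ↪ {x : Fin n // x ≠ ⟨0, hn⟩}) :
    (cycList n j hn e).Nodup := by
  rw [cycList, List.nodup_cons]
  constructor
  · rw [List.mem_ofFn]
    rintro ⟨i, hi⟩
    exact (e i).2 hi
  · rw [List.nodup_ofFn]
    exact fun a b hab => e.injective (Subtype.ext hab)

private lemma mem_cycList {n j : ℕ} (hn : 0 < n)
    {e : Fin (j - 1) ↪ {x : Fin n // x ≠ ⟨0, hn⟩}} {x : Fin n} :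
    x ∈ cycList n j hn e ↔ x = ⟨0, hn⟩ ∨ ∃ i, ((e i : {x : Fin n // x ≠ ⟨0, hn⟩}) : Fin n) = x := by
  simp [cycList, List.mem_ofFn]

private def DSet (n j : ℕ) (hn : 0 < n)
    (e : Fin (j - 1) ↪ {x : Fin n // x ≠ ⟨0, hn⟩}) : Finset (Fin n) :=
  Finset.univ.filter (fun x => x ∉ cycList n j hn e)

private lemma mem_DSet {n j : ℕ} (hn : 0 < n)
    {e : Fin (j - 1) ↪ {x : Fin n // x ≠ ⟨0, hn⟩}} {x : Fin n} :
    x ∈ DSet n j hn e ↔ x ∉ cycList n j hn e := by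
  simp [DSet]

private lemma DSet_card {n j : ℕ} (hn : 0 < n) (hj : 1 ≤ j) (hjn : j ≤ n)
    (e : Fin (j - 1) ↪ {x : Fin n // x ≠ ⟨0, hn⟩}) :
    (DSet n j hn e).card = n - j := by
  have h1 : DSet n j hn e = Finset.univ \ (cycList n j hn e).toFinset := by
    ext x; simp [DSet]
  rw [h1, Finset.card_sdiff_of_subset (Finset.subset_univ _),
    List.toFinset_card_of_nodup (cycList_nodup hn e), cycList_length hn hj e]
  simp

private noncomputable def buildPerm (n j : ℕ) (hn : 0 < n) (hj : 1 ≤ j) (hjn : j ≤ n)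
    (e : Fin (j - 1) ↪ {x : Fin n // x ≠ ⟨0, hn⟩}) (τ : Equiv.Perm (Fin (n - j))) :
    Equiv.Perm (Fin n) :=
  (cycList n j hn e).formPerm *
    Equiv.Perm.ofSubtype
      ((((DSet n j hn e).orderIsoOfFin (DSet_card hn hj hjn e)).toEquiv).permCongr τ)

end Build

section BuildFacts

variable {n j m : ℕ} (hn : 0 < n) (hj : 1 ≤ j) (hjn : j ≤ n)
  (e : Fin (j - 1) ↪ {x : Fin n // x ≠ ⟨0, hn⟩}) (τ : Equiv.Perm (Fin (n - j)))

private lemma formPerm_iterate_mem {β : Type*} [DecidableEq β] (l : List β) {x : β}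
    (hx : x ∈ l) (k : ℕ) : (⇑l.formPerm)^[k] x ∈ l := by
  induction k with
  | zero => exact hx
  | succ k ih =>
      rw [Function.iterate_succ_apply']
      exact List.formPerm_apply_mem_of_mem ih

private lemma ofSubtype_fix {x : Fin n} (hx : x ∈ cycList n j hn e) :
    Equiv.Perm.ofSubtype
      ((((DSet n j hn e).orderIsoOfFin (DSet_card hn hj hjn e)).toEquiv).permCongr τ) x = x :=
  Equiv.Perm.ofSubtype_apply_of_not_mem _ (fun hmem => ((mem_DSet hn).mp hmem) hx)

private lemma buildPerm_iterate_cyc {x : Fin n} (hx : x ∈ cycList n j hn e) (k : ℕ) :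
    (⇑(buildPerm n j hn hj hjn e τ))^[k] x = (⇑(cycList n j hn e).formPerm)^[k] x :=
  iterate_mul_left _ _ _
    (fun k => ofSubtype_fix hn hj hjn e τ (formPerm_iterate_mem _ hx k)) k

private lemma tPart_iterate_mem (k : ℕ) {x : Fin n} (hx : x ∈ DSet n j hn e) :
    (⇑(Equiv.Perm.ofSubtype
      ((((DSet n j hn e).orderIsoOfFin (DSet_card hn hj hjn e)).toEquiv).permCongr τ)))^[k] x
      ∈ DSet n j hn e := by
  induction k with
  | zero => exact hx
  | succ k ih =>
      rw [Function.iterate_succ_apply', Equiv.Perm.ofSubtype_apply_of_mem _ ih]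
      exact Subtype.prop _

private lemma buildPerm_iterate_D {x : Fin n} (hx : x ∈ DSet n j hn e) (k : ℕ) :
    (⇑(buildPerm n j hn hj hjn e τ))^[k] x =
      (⇑(Equiv.Perm.ofSubtype
        ((((DSet n j hn e).orderIsoOfFin (DSet_card hn hj hjn e)).toEquiv).permCongr τ)))^[k] x :=
  iterate_mul_right _ _ _
    (fun k => List.formPerm_apply_of_notMem
      ((mem_DSet hn).mp (tPart_iterate_mem hn hj hjn e τ k hx))) k

private lemma buildPerm_mp_cyc {x : Fin n} (hx : x ∈ cycList n j hn e) :
    Function.minimalPeriod ⇑(buildPerm n j hn hj hjn e τ) x = j := by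
  rw [minimalPeriod_congr_iter x (buildPerm_iterate_cyc hn hj hjn e τ hx),
    formPerm_minimalPeriod _ (cycList_nodup hn e) hx, cycList_length hn hj e]

private lemma buildPerm_mp_D {x : Fin n} (hx : x ∈ DSet n j hn e) :
    Function.minimalPeriod ⇑(buildPerm n j hn hj hjn e τ) x =
      Function.minimalPeriod ⇑τ
        ((((DSet n j hn e).orderIsoOfFin (DSet_card hn hj hjn e)).toEquiv).symm ⟨x, hx⟩) := by
  rw [minimalPeriod_congr_iter x (buildPerm_iterate_D hn hj hjn e τ hx)]
  have h1 := minimalPeriod_ofSubtype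
    ((((DSet n j hn e).orderIsoOfFin (DSet_card hn hj hjn e)).toEquiv).permCongr τ) ⟨x, hx⟩
  have h2 := minimalPeriod_permCongr
    (((DSet n j hn e).orderIsoOfFin (DSet_card hn hj hjn e)).toEquiv) τ
    ((((DSet n j hn e).orderIsoOfFin (DSet_card hn hj hjn e)).toEquiv).symm ⟨x, hx⟩)
  rw [Equiv.apply_symm_apply] at h2
  exact h1.trans h2

private lemma zero_mem_cycList : (⟨0, hn⟩ : Fin n) ∈ cycList n j hn e :=
  (mem_cycList hn).mpr (Or.inl rfl)

private lemma buildPerm_mp_zero :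
    Function.minimalPeriod ⇑(buildPerm n j hn hj hjn e τ) ⟨0, hn⟩ = j :=
  buildPerm_mp_cyc hn hj hjn e τ (zero_mem_cycList hn e)

private lemma buildPerm_good (hmj : m < j) (hτ : PermGood m τ) :
    PermGood m (buildPerm n j hn hj hjn e τ) := by
  intro x
  rcases em (x ∈ cycList n j hn e) with hx | hx
  · rw [buildPerm_mp_cyc hn hj hjn e τ hx]; exact hmj
  · rw [buildPerm_mp_D hn hj hjn e τ ((mem_DSet hn).mpr hx)]; exact hτ _

private lemma buildPerm_iterate_zero (i : Fin (j - 1)) :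
    (⇑(buildPerm n j hn hj hjn e τ))^[i.val + 1] ⟨0, hn⟩ =
      ((e i : {x : Fin n // x ≠ ⟨0, hn⟩}) : Fin n) := by
  have hilt := i.isLt
  rw [buildPerm_iterate_cyc hn hj hjn e τ (zero_mem_cycList hn e) (i.val + 1)]
  have hlen : (cycList n j hn e).length = j := cycList_length hn hj e
  rw [Equiv.Perm.iterate_eq_pow]
  unfold cycList
  rw [List.formPerm_pow_apply_head _ _ (cycList_nodup hn e) (i.val + 1)]
  have hidx : (i.val + 1) %
      ((⟨0, hn⟩ : Fin n) :: List.ofFn fun i =>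
        ((e i : {x : Fin n // x ≠ ⟨0, hn⟩}) : Fin n)).length = i.val + 1 := by
    rw [show ((⟨0, hn⟩ : Fin n) :: List.ofFn fun i =>
        ((e i : {x : Fin n // x ≠ ⟨0, hn⟩}) : Fin n)).length = j from hlen]
    exact Nat.mod_eq_of_lt (by omega)
  simp only [hidx]
  simp [List.getElem_ofFn]

end BuildFacts

section Emb

variable {n j : ℕ} (hn : 0 < n)

private def embOf (σ : Equiv.Perm (Fin n))
    (hmp : Function.minimalPeriod ⇑σ ⟨0, hn⟩ = j) :
    Fin (j - 1) ↪ {x : Fin n // x ≠ ⟨0, hn⟩} where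
  toFun i := ⟨(⇑σ)^[i.val + 1] ⟨0, hn⟩, by
    have hilt := i.isLt
    intro hcontra
    have := Function.iterate_injOn_Iio_minimalPeriod (f := ⇑σ) (x := (⟨0, hn⟩ : Fin n))
      (by simp only [Set.mem_Iio, hmp]; omega) (by simp only [Set.mem_Iio, hmp]; omega)
      (show (⇑σ)^[i.val + 1] ⟨0, hn⟩ = (⇑σ)^[0] ⟨0, hn⟩ from hcontra)
    omega⟩
  inj' a b hab := by
    have ha := a.isLt; have hb := b.isLt
    have hval := congrArg Subtype.val hab
    have := Function.iterate_injOn_Iio_minimalPeriod (f := ⇑σ) (x := (⟨0, hn⟩ : Fin n))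
      (by simp only [Set.mem_Iio, hmp]; omega) (by simp only [Set.mem_Iio, hmp]; omega) hval
    exact Fin.ext (by omega)

private lemma cycList_embOf_getElem (σ : Equiv.Perm (Fin n))
    (hmp : Function.minimalPeriod ⇑σ ⟨0, hn⟩ = j) (hj : 1 ≤ j)
    (i : ℕ) (hij : i < j) :
    (cycList n j hn (embOf hn σ hmp))[i]'(by rw [cycList_length hn hj]; exact hij) =
      (⇑σ)^[i] ⟨0, hn⟩ := by
  cases i with
  | zero => rfl
  | succ i =>
      show (List.ofFn _)[i]'_ = _
      rw [List.getElem_ofFn]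
      rfl

private lemma mem_cycList_embOf (σ : Equiv.Perm (Fin n))
    (hmp : Function.minimalPeriod ⇑σ ⟨0, hn⟩ = j) (hj : 1 ≤ j) {x : Fin n} :
    x ∈ cycList n j hn (embOf hn σ hmp) ↔ ∃ i, i < j ∧ (⇑σ)^[i] ⟨0, hn⟩ = x := by
  rw [List.mem_iff_getElem]
  constructor
  · rintro ⟨i, hi, rfl⟩
    rw [cycList_length hn hj] at hi
    exact ⟨i, hi, (cycList_embOf_getElem hn σ hmp hj i hi).symm⟩
  · rintro ⟨i, hi, rfl⟩
    exact ⟨i, by rw [cycList_length hn hj]; exact hi, cycList_embOf_getElem hn σ hmp hj i hi⟩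

private lemma DSet_invariant (σ : Equiv.Perm (Fin n))
    (hmp : Function.minimalPeriod ⇑σ ⟨0, hn⟩ = j) (hj : 1 ≤ j) :
    ∀ x, x ∈ DSet n j hn (embOf hn σ hmp) ↔ σ x ∈ DSet n j hn (embOf hn σ hmp) := by
  have hper : (⇑σ)^[j] (⟨0, hn⟩ : Fin n) = ⟨0, hn⟩ := by
    rw [← hmp]; exact Function.iterate_minimalPeriod
  have horb : ∀ x : Fin n, x ∈ cycList n j hn (embOf hn σ hmp) ↔
      σ x ∈ cycList n j hn (embOf hn σ hmp) := by
    intro x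
    rw [mem_cycList_embOf hn σ hmp hj, mem_cycList_embOf hn σ hmp hj]
    constructor
    · rintro ⟨i, hi, rfl⟩
      rcases Nat.lt_or_ge (i + 1) j with h1 | h1
      · exact ⟨i + 1, h1, Function.iterate_succ_apply' ⇑σ i ⟨0, hn⟩⟩
      · have hij : i + 1 = j := by omega
        refine ⟨0, by omega, ?_⟩
        have hs : σ ((⇑σ)^[i] (⟨0, hn⟩ : Fin n)) = (⇑σ)^[i + 1] ⟨0, hn⟩ :=
          (Function.iterate_succ_apply' ⇑σ i ⟨0, hn⟩).symm
        rw [hs, hij, hper]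
        rfl
    · rintro ⟨i, hi, hix⟩
      rcases Nat.eq_zero_or_pos i with rfl | hipos
      · refine ⟨j - 1, by omega, ?_⟩
        apply σ.injective
        have hs : σ ((⇑σ)^[j - 1] (⟨0, hn⟩ : Fin n)) = (⇑σ)^[j - 1 + 1] ⟨0, hn⟩ :=
          (Function.iterate_succ_apply' ⇑σ (j - 1) ⟨0, hn⟩).symm
        rw [hs, show j - 1 + 1 = j by omega, hper]
        exact hix
      · refine ⟨i - 1, by omega, ?_⟩
        apply σ.injective
        have hs : σ ((⇑σ)^[i - 1] (⟨0, hn⟩ : Fin n)) = (⇑σ)^[i - 1 + 1] ⟨0, hn⟩ :=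
          (Function.iterate_succ_apply' ⇑σ (i - 1) ⟨0, hn⟩).symm
        rw [hs, show i - 1 + 1 = i by omega]
        exact hix
  intro x
  rw [mem_DSet hn, mem_DSet hn]
  exact not_congr (horb x)

private lemma buildPerm_embOf (σ : Equiv.Perm (Fin n))
    (hmp : Function.minimalPeriod ⇑σ ⟨0, hn⟩ = j) (hj : 1 ≤ j) (hjn : j ≤ n) :
    buildPerm n j hn hj hjn (embOf hn σ hmp)
      ((((DSet n j hn (embOf hn σ hmp)).orderIsoOfFin
          (DSet_card hn hj hjn (embOf hn σ hmp))).toEquiv).permCongr.symm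
        (σ.subtypePerm (fun x => (DSet_invariant hn σ hmp hj x).symm))) = σ := by
  set e := embOf hn σ hmp with he
  set τ := (((DSet n j hn e).orderIsoOfFin (DSet_card hn hj hjn e)).toEquiv).permCongr.symm
        (σ.subtypePerm (fun x => (DSet_invariant hn σ hmp hj x).symm)) with hτ
  have hρ : (((DSet n j hn e).orderIsoOfFin (DSet_card hn hj hjn e)).toEquiv).permCongr τ
      = σ.subtypePerm (fun x => (DSet_invariant hn σ hmp hj x).symm) := by
    rw [hτ]; exact Equiv.apply_symm_apply _ _
  apply Equiv.ext
  intro x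
  have hper : (⇑σ)^[j] (⟨0, hn⟩ : Fin n) = ⟨0, hn⟩ := by
    rw [← hmp]; exact Function.iterate_minimalPeriod
  rcases em (x ∈ cycList n j hn e) with hx | hx
  · have h1 := buildPerm_iterate_cyc hn hj hjn e τ hx 1
    simp only [Function.iterate_one] at h1
    rw [h1]
    obtain ⟨i, hi, hix⟩ := (mem_cycList_embOf hn σ hmp hj).mp hx
    have hilen : i < (cycList n j hn e).length := by rw [cycList_length hn hj]; exact hi
    have hgx : (cycList n j hn e)[i]'hilen = x := by
      rw [cycList_embOf_getElem hn σ hmp hj i hi]; exact hix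
    have hfp := List.formPerm_pow_apply_getElem (cycList n j hn e) (cycList_nodup hn e) 1 i hilen
    rw [pow_one, hgx] at hfp
    rw [hfp]
    rcases Nat.lt_or_ge (i + 1) j with hlt | hge
    · have hmod : (i + 1) % (cycList n j hn e).length = i + 1 := by
        rw [cycList_length hn hj]; exact Nat.mod_eq_of_lt hlt
      simp only [hmod]
      rw [cycList_embOf_getElem hn σ hmp hj (i + 1) hlt, ← hix]
      exact Function.iterate_succ_apply' ⇑σ i ⟨0, hn⟩
    · have hij : i + 1 = j := by omega
      have hmod : (i + 1) % (cycList n j hn e).length = 0 := by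
        rw [cycList_length hn hj, hij, Nat.mod_self]
      simp only [hmod]
      rw [cycList_embOf_getElem hn σ hmp hj 0 (by omega)]
      have h2 : σ x = (⟨0, hn⟩ : Fin n) := by
        have hs : σ ((⇑σ)^[i] (⟨0, hn⟩ : Fin n)) = (⇑σ)^[i + 1] ⟨0, hn⟩ :=
          (Function.iterate_succ_apply' ⇑σ i ⟨0, hn⟩).symm
        rw [← hix, hs, hij, hper]
      exact h2.symm
  · have hxD : x ∈ DSet n j hn e := (mem_DSet hn).mpr hx
    have h1 := buildPerm_iterate_D hn hj hjn e τ hxD 1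
    simp only [Function.iterate_one] at h1
    rw [h1, hρ, Equiv.Perm.ofSubtype_apply_of_mem _ hxD]
    rfl

end Emb

private lemma card_fiber (n m j : ℕ) (hn : 0 < n) (hmj : m < j) (hjn : j ≤ n) :
    Nat.card {σ : Equiv.Perm (Fin n) // PermGood m σ ∧
        Function.minimalPeriod ⇑σ ⟨0, hn⟩ = j} =
      (n - 1).descFactorial (j - 1) * NNc m (n - j) := by
  classical
  have hj : 1 ≤ j := by omega
  set G : ((Fin (j - 1) ↪ {x : Fin n // x ≠ ⟨0, hn⟩}) ×
      {τ : Equiv.Perm (Fin (n - j)) // PermGood m τ}) →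
      {σ : Equiv.Perm (Fin n) // PermGood m σ ∧
        Function.minimalPeriod ⇑σ ⟨0, hn⟩ = j} :=
    fun p => ⟨buildPerm n j hn hj hjn p.1 p.2.1,
      buildPerm_good hn hj hjn p.1 p.2.1 hmj p.2.2,
      buildPerm_mp_zero hn hj hjn p.1 p.2.1⟩ with hGdef
  have hbij : Function.Bijective G := by
    constructor
    · rintro ⟨e₁, τ₁, hτ₁⟩ ⟨e₂, τ₂, hτ₂⟩ hEq
      have hperm : buildPerm n j hn hj hjn e₁ τ₁ = buildPerm n j hn hj hjn e₂ τ₂ :=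
        congrArg Subtype.val hEq
      have he : e₁ = e₂ := by
        refine Function.Embedding.ext fun i => Subtype.ext ?_
        have h1 := buildPerm_iterate_zero hn hj hjn e₁ τ₁ i
        have h2 := buildPerm_iterate_zero hn hj hjn e₂ τ₂ i
        rw [← h1, ← h2, hperm]
      subst he
      unfold buildPerm at hperm
      have hcancel := mul_left_cancel hperm
      have hρ : (((DSet n j hn e₁).orderIsoOfFin
            (DSet_card hn hj hjn e₁)).toEquiv).permCongr τ₁ =
          (((DSet n j hn e₁).orderIsoOfFin
            (DSet_card hn hj hjn e₁)).toEquiv).permCongr τ₂ := by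
        apply Equiv.ext
        intro w
        have hw := congrArg (fun π : Equiv.Perm (Fin n) => π ((w : Fin n))) hcancel
        simp only [Equiv.Perm.ofSubtype_apply_coe] at hw
        exact Subtype.coe_inj.mp hw
      have hττ : τ₁ = τ₂ :=
        (Equiv.injective _ ) hρ
      simp only [Prod.mk.injEq, Subtype.mk.injEq]
      exact ⟨trivial, hττ⟩
    · rintro ⟨σ, hGood, hmp⟩
      set g := (((DSet n j hn (embOf hn σ hmp)).orderIsoOfFin
          (DSet_card hn hj hjn (embOf hn σ hmp))).toEquiv) with hg
      set τ := g.permCongr.symm (σ.subtypePerm (fun x => (DSet_invariant hn σ hmp hj x).symm)) with hτ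
      have hτGood : PermGood m τ := by
        intro y
        have h1 := minimalPeriod_permCongr g.symm
          (σ.subtypePerm (fun x => (DSet_invariant hn σ hmp hj x).symm)) (g y)
        rw [Equiv.symm_apply_apply] at h1
        have h2 := minimalPeriod_subtypePerm σ (DSet_invariant hn σ hmp hj) (g y)
        have h3 : Function.minimalPeriod ⇑τ y =
            Function.minimalPeriod ⇑σ ((g y : Fin n)) := h1.trans h2
        rw [h3]
        exact hGood _
      refine ⟨⟨embOf hn σ hmp, ⟨τ, hτGood⟩⟩, ?_⟩
      exact Subtype.ext (buildPerm_embOf hn σ hmp hj hjn)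
  have hcard := Nat.card_eq_of_bijective G hbij
  rw [← hcard, Nat.card_prod]
  have h1 : Nat.card (Fin (j - 1) ↪ {x : Fin n // x ≠ ⟨0, hn⟩}) =
      (n - 1).descFactorial (j - 1) := by
    rw [Nat.card_eq_fintype_card, Fintype.card_embedding_eq, Fintype.card_fin]
    congr 1
    rw [Fintype.card_subtype_compl, Fintype.card_subtype_eq, Fintype.card_fin]
  rw [h1]
  rfl

private lemma NNc_rec (n m : ℕ) (hmn : m < n) :
    NNc m n = ∑ j ∈ Finset.Icc (m + 1) n, (n - 1).descFactorial (j - 1) * NNc m (n - j) := by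
  classical
  have hn : 0 < n := by omega
  have h1 : NNc m n =
      (Finset.univ.filter (fun σ : Equiv.Perm (Fin n) => PermGood m σ)).card := by
    rw [NNc, Nat.card_eq_fintype_card, Fintype.card_subtype]
  have hH : ∀ σ ∈ Finset.univ.filter (fun σ : Equiv.Perm (Fin n) => PermGood m σ),
      Function.minimalPeriod ⇑σ ⟨0, hn⟩ ∈ Finset.Icc (m + 1) n := by
    intro σ hσ
    rw [Finset.mem_filter] at hσ
    rw [Finset.mem_Icc]
    exact ⟨hσ.2 _, perm_minimalPeriod_le n σ _⟩
  rw [h1, Finset.card_eq_sum_card_fiberwise hH]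
  apply Finset.sum_congr rfl
  intro j hj
  rw [Finset.mem_Icc] at hj
  have h3 : (Finset.filter (fun σ : Equiv.Perm (Fin n) =>
        Function.minimalPeriod ⇑σ ⟨0, hn⟩ = j)
      (Finset.univ.filter fun σ => PermGood m σ)).card
      = Nat.card {σ : Equiv.Perm (Fin n) // PermGood m σ ∧
          Function.minimalPeriod ⇑σ ⟨0, hn⟩ = j} := by
    rw [Nat.card_eq_fintype_card, Fintype.card_subtype, Finset.filter_filter]
  rw [h3, card_fiber n m j hn (by omega) hj.2]


private lemma pProportion_eq_NNc (n m : ℕ) :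
    pProportion n m = (NNc m n : ℝ) / (n.factorial : ℝ) := rfl

/-- **Lemma 8.** For `n > m ≥ 0`: `n·p(n,m) = 1 + ∑_{m < k < n-m} p(k,m)`. -/
theorem statement18 (n m : ℕ) (h : m < n) :
    (n : ℝ) * pProportion n m = 1 + ∑ k ∈ Finset.Ioo m (n - m), pProportion k m := by
  have hn : 0 < n := by omega
  have hn0 : (n : ℝ) ≠ 0 := (Nat.cast_pos.mpr hn).ne'
  have hfac0 : (((n - 1).factorial : ℝ)) ≠ 0 := (Nat.cast_pos.mpr (Nat.factorial_pos _)).ne'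
  have hstep1 : (n : ℝ) * pProportion n m = (NNc m n : ℝ) / ((n - 1).factorial : ℝ) := by
    rw [pProportion_eq_NNc]
    have hf : (n.factorial : ℝ) = (n : ℝ) * ((n - 1).factorial : ℝ) := by
      obtain ⟨n', rfl⟩ : ∃ n', n = n' + 1 := ⟨n - 1, by omega⟩
      simp only [Nat.factorial_succ, Nat.add_sub_cancel]
      push_cast
      ring
    rw [hf]
    field_simp
  rw [hstep1, NNc_rec n m h]
  push_cast
  rw [Finset.sum_div]
  have hstep2 : ∀ j ∈ Finset.Icc (m + 1) n,
      ((n - 1).descFactorial (j - 1) : ℝ) * (NNc m (n - j) : ℝ) / ((n - 1).factorial : ℝ)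
        = pProportion (n - j) m := by
    intro j hj
    rw [Finset.mem_Icc] at hj
    have hkey : ((n - j).factorial) * ((n - 1).descFactorial (j - 1)) = (n - 1).factorial := by
      have h2 := Nat.factorial_mul_descFactorial (show j - 1 ≤ n - 1 by omega)
      rwa [show n - 1 - (j - 1) = n - j by omega] at h2
    rw [pProportion_eq_NNc]
    have hd0 : ((n - 1).descFactorial (j - 1) : ℝ) ≠ 0 := by
      have hlt : ¬ (n - 1 < j - 1) := by omega
      have := Nat.descFactorial_eq_zero_iff_lt (n := n - 1) (k := j - 1)
      intro hc
      exact hlt (this.mp (by exact_mod_cast hc))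
    have hkeyR : ((n - j).factorial : ℝ) * ((n - 1).descFactorial (j - 1) : ℝ)
        = ((n - 1).factorial : ℝ) := by exact_mod_cast hkey
    rw [← hkeyR, mul_comm ((n - j).factorial : ℝ) ((n - 1).descFactorial (j - 1) : ℝ),
      mul_div_mul_left _ _ hd0]
  rw [Finset.sum_congr rfl hstep2]
  have hreindex : ∑ j ∈ Finset.Icc (m + 1) n, pProportion (n - j) m
      = ∑ k ∈ Finset.range (n - m), pProportion k m := by
    refine Finset.sum_nbij' (fun j => n - j) (fun k => n - k) ?_ ?_ ?_ ?_ ?_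
    · intro a ha; rw [Finset.mem_Icc] at ha; rw [Finset.mem_range]; omega
    · intro a ha; rw [Finset.mem_range] at ha; rw [Finset.mem_Icc]; omega
    · intro a ha; rw [Finset.mem_Icc] at ha; omega
    · intro a ha; rw [Finset.mem_range] at ha; omega
    · intro a ha; rfl
  rw [hreindex]
  have hsplit : Finset.range (n - m) = insert 0 (Finset.Ico 1 (n - m)) := by
    ext x
    simp only [Finset.mem_range, Finset.mem_insert, Finset.mem_Ico]
    omega
  rw [hsplit, Finset.sum_insert (by simp)]
  have hp0 : pProportion 0 m = 1 := by
    rw [pProportion_eq_NNc, NNc_zero]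
    simp
  rw [hp0]
  congr 1
  have hsub : Finset.Ioo m (n - m) ⊆ Finset.Ico 1 (n - m) := by
    intro x hx; rw [Finset.mem_Ioo] at hx; rw [Finset.mem_Ico]; omega
  have hvan : ∀ x ∈ Finset.Ico 1 (n - m), x ∉ Finset.Ioo m (n - m) → pProportion x m = 0 := by
    intro x hx hnx
    rw [Finset.mem_Ico] at hx
    rw [Finset.mem_Ioo] at hnx
    push_neg at hnx
    rw [pProportion_eq_NNc, NNc_eq_zero m x (by omega) (by omega)]
    simp
  rw [← Finset.sum_subset hsub hvan]
end

section
/- Let q be a prime power, m ≥ 1 an integer, and let F = P₁·P₂·⋯·P_j be a monic polynomial of degree n ≥ 1 over 𝔽_q, where P₁,…,P_j are monic irreducible polynomials (listed with multiplicity) ordered so that deg(P₁) ≤ deg(P₂) ≤ ⋯ ≤ deg(P_j). Then the set A₁(F) of degrees of monic divisors of F has no gaps of size greater than m if and only if deg(P_i) ≤ m + deg(P₁⋯P_{i−1}) for every i with 1 ≤ i ≤ j, where the empty product (for i = 1) has degree 0. -/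
open Polynomial

section Statement19Aux

open Polynomial

variable {F : Type} [Field F]

private lemma monic_list_prod' {l : List F[X]} (h : ∀ P ∈ l, P.Monic) : l.prod.Monic := by
  induction l with
  | nil => simp [monic_one]
  | cons P t ih =>
    rw [List.prod_cons]
    exact (h P (by simp)).mul (ih fun Q hQ => h Q (by simp [hQ]))

private lemma zero_mem_degreeSet' (Q : F[X]) : 0 ∈ degreeSet Q :=
  ⟨1, monic_one, one_dvd _, natDegree_one⟩

private lemma le_of_mem_degreeSet' {Q : F[X]} (hQ : Q ≠ 0) {b : ℕ} (hb : b ∈ degreeSet Q) :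
    b ≤ Q.natDegree := by
  obtain ⟨D, hD, hdvd, rfl⟩ := hb
  exact natDegree_le_of_dvd hdvd hQ

private lemma degreeSet_mul' (Q P : F[X]) (hP : P.Monic) (hPi : Irreducible P) :
    degreeSet (Q * P) = degreeSet Q ∪ (· + P.natDegree) '' degreeSet Q := by
  ext b
  constructor
  · rintro ⟨D, hDm, hDdvd, rfl⟩
    by_cases hpd : P ∣ D
    · obtain ⟨D', rfl⟩ := hpd
      right
      have hD'm : D'.Monic := hP.of_mul_monic_left hDm
      have hD'dvd : D' ∣ Q := by
        obtain ⟨E, hE⟩ := hDdvd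
        refine ⟨E, mul_right_cancel₀ hP.ne_zero ?_⟩
        rw [hE]; ring
      exact ⟨D'.natDegree, ⟨D', hD'm, hD'dvd, rfl⟩, by
        rw [hP.natDegree_mul hD'm]; ring⟩
    · left
      have hcop : IsCoprime P D := hPi.coprime_iff_not_dvd.2 hpd
      exact ⟨D, hDm, hcop.symm.dvd_of_dvd_mul_right hDdvd, rfl⟩
  · rintro (⟨D, h1, h2, rfl⟩ | ⟨c, ⟨D, h1, h2, rfl⟩, rfl⟩)
    · exact ⟨D, h1, h2.mul_right P, rfl⟩
    · exact ⟨D * P, h1.mul hP, mul_dvd_mul h2 dvd_rfl, h1.natDegree_mul hP⟩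

private lemma gapCover' {N m : ℕ} {A : Set ℕ} (h : NoGaps N m A) (h0 : 0 ∈ A) :
    ∀ t, t < N → ∃ b ∈ A, t < b ∧ b ≤ t + m := by
  classical
  intro t ht
  have hcA : Nat.findGreatest (· ∈ A) t ∈ A := Nat.findGreatest_spec (Nat.zero_le t) h0
  have hct : Nat.findGreatest (· ∈ A) t ≤ t := Nat.findGreatest_le t
  obtain ⟨b, hbA, hcb, hbm⟩ := h _ hcA (lt_of_le_of_lt hct ht)
  refine ⟨b, hbA, ?_, le_trans hbm (by omega)⟩
  by_contra hbt
  push_neg at hbt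
  have : b ≤ Nat.findGreatest (· ∈ A) t := Nat.le_findGreatest hbt hbA
  omega

private lemma smallBig' (l₁ : List F[X]) (h1 : ∀ P ∈ l₁, P.Monic) (d : ℕ) :
    ∀ l₂ : List F[X], (∀ P ∈ l₂, P.Monic) → (∀ P ∈ l₂, Irreducible P) →
      (∀ P ∈ l₂, d ≤ P.natDegree) →
      ∀ b ∈ degreeSet (l₁ ++ l₂).prod, b ≤ l₁.prod.natDegree ∨ d ≤ b := by
  intro l₂
  induction l₂ using List.reverseRecOn with
  | nil =>
    intro _ _ _ b hb
    left
    simp only [List.append_nil] at hb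
    exact le_of_mem_degreeSet' (monic_list_prod' h1).ne_zero hb
  | append_singleton t P ih =>
    intro h2m h2i hd b hb
    have htm : ∀ Q ∈ t, Q.Monic := fun Q hQ => h2m Q (by simp [hQ])
    have hprod : (l₁ ++ (t ++ [P])).prod = (l₁ ++ t).prod * P := by
      rw [← List.append_assoc, List.prod_append, List.prod_singleton]
    rw [hprod, degreeSet_mul' _ P (h2m P (by simp)) (h2i P (by simp))] at hb
    rcases hb with hb | ⟨c, _, hceq⟩
    · exact ih htm (fun Q hQ => h2i Q (by simp [hQ])) (fun Q hQ => hd Q (by simp [hQ])) b hb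
    · right
      have h1 := hd P (by simp)
      have h2 : c + P.natDegree = b := by simpa using hceq
      omega

private lemma noGaps_of_cond' (m : ℕ) :
    ∀ l : List F[X], (∀ P ∈ l, P.Monic) → (∀ P ∈ l, Irreducible P) →
    (∀ i : Fin l.length, (l.get i).natDegree ≤ m + ((l.take i).prod).natDegree) →
    NoGaps l.prod.natDegree m (degreeSet l.prod) := by
  intro l
  induction l using List.reverseRecOn with
  | nil => intro _ _ _ a _ ha; simp at ha
  | append_singleton t P ih =>
    intro hmon hirr hcond
    have htm : ∀ Q ∈ t, Q.Monic := fun Q hQ => hmon Q (by simp [hQ])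
    have hti : ∀ Q ∈ t, Irreducible Q := fun Q hQ => hirr Q (by simp [hQ])
    have hPm : P.Monic := hmon P (by simp)
    have hPi : Irreducible P := hirr P (by simp)
    have hd1 : 1 ≤ P.natDegree := hPi.natDegree_pos
    have hlast : P.natDegree ≤ m + t.prod.natDegree := by
      have := hcond ⟨t.length, by simp⟩
      simpa using this
    have htcond : ∀ i : Fin t.length,
        (t.get i).natDegree ≤ m + ((t.take i).prod).natDegree := by
      intro i
      have := hcond ⟨i, by simp⟩
      simpa [List.getElem_append, i.isLt, List.take_append_of_le_length i.isLt.le] using this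
    have hng : NoGaps t.prod.natDegree m (degreeSet t.prod) := ih htm hti htcond
    have hprod : (t ++ [P]).prod = t.prod * P := by
      rw [List.prod_append, List.prod_singleton]
    have htpm : t.prod.Monic := monic_list_prod' htm
    rw [hprod, degreeSet_mul' _ _ hPm hPi, htpm.natDegree_mul hPm]
    set n' := t.prod.natDegree with hn'
    set d := P.natDegree with hdd
    intro a ha haN
    rcases ha with haA | ⟨c, hcA, hceq⟩
    swap
    · have haeq : a = c + d := by simpa using hceq.symm
      have hcn' : c ≤ n' := le_of_mem_degreeSet' htpm.ne_zero hcA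
      have hclt : c < n' := by omega
      obtain ⟨b, hbA, hcb, hbm⟩ := hng c hcA hclt
      exact ⟨b + d, Or.inr ⟨b, hbA, rfl⟩, by omega, by omega⟩
    · have han' : a ≤ n' := le_of_mem_degreeSet' htpm.ne_zero haA
      rcases lt_or_eq_of_le han' with hlt | heq
      · obtain ⟨b, hbA, hab, hbm⟩ := hng a haA hlt
        exact ⟨b, Or.inl hbA, hab, hbm⟩
      · by_cases hdm : d ≤ m
        · exact ⟨a + d, Or.inr ⟨a, haA, rfl⟩, by omega, by omega⟩
        · by_cases hdn : d ≤ a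
          · obtain ⟨c, hcA, hc1, hc2⟩ := gapCover' hng (zero_mem_degreeSet' _) (a - d)
              (by omega)
            exact ⟨c + d, Or.inr ⟨c, hcA, rfl⟩, by omega, by omega⟩
          · refine ⟨0 + d, Or.inr ⟨0, zero_mem_degreeSet' _, rfl⟩, by omega, by omega⟩

end Statement19Aux

/-- **Lemma (structure of `A₁`).** Let `F = P₁⋯P_j` be monic of degree `n ≥ 1` with the
`Pᵢ` monic irreducible and sorted by degree. Then the set of degrees of divisors of `F`
has no gaps of size greater than `m` iff `deg Pᵢ ≤ m + deg(P₁⋯P_{i-1})` for all `i`. -/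
theorem statement19 (F : Type) [Field F] [Fintype F] (m : ℕ) (hm : 1 ≤ m)
    (l : List (Polynomial F)) (hmonic : ∀ P ∈ l, P.Monic) (hirr : ∀ P ∈ l, Irreducible P)
    (hsorted : l.Pairwise fun A B => A.natDegree ≤ B.natDegree)
    (n : ℕ) (hn : 1 ≤ n) (hdeg : l.prod.natDegree = n) :
    NoGaps n m (degreeSet l.prod) ↔
      ∀ i : Fin l.length, (l.get i).natDegree ≤ m + ((l.take i).prod).natDegree := by
  subst hdeg
  constructor
  · intro h i
    set d := (l.get i).natDegree with hd
    have hsplit : l = l.take (i : ℕ) ++ l.drop (i : ℕ) := (List.take_append_drop i l).symm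
    have htake_m : ∀ P ∈ l.take (i : ℕ), P.Monic :=
      fun P hP => hmonic P ((List.take_sublist _ l).subset hP)
    have hdrop_m : ∀ P ∈ l.drop (i : ℕ), P.Monic :=
      fun P hP => hmonic P ((List.drop_sublist _ l).subset hP)
    have hdrop_i : ∀ P ∈ l.drop (i : ℕ), Irreducible P :=
      fun P hP => hirr P ((List.drop_sublist _ l).subset hP)
    have hdropcons : l.drop (i : ℕ) = l.get i :: l.drop ((i : ℕ) + 1) := by
      rw [List.drop_eq_getElem_cons i.isLt, List.get_eq_getElem]
    have htpm : (l.take (i : ℕ)).prod.Monic := monic_list_prod' htake_m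
    have hdpm : (l.drop (i : ℕ)).prod.Monic := monic_list_prod' hdrop_m
    have hd1 : 1 ≤ d := (hirr _ (l.get_mem i)).natDegree_pos
    have hdge : ∀ P ∈ l.drop (i : ℕ), d ≤ P.natDegree := by
      have hds : (l.drop (i : ℕ)).Pairwise fun A B => A.natDegree ≤ B.natDegree :=
        hsorted.sublist (List.drop_sublist _ _)
      rw [hdropcons] at hds
      obtain ⟨hhead, -⟩ := List.pairwise_cons.mp hds
      intro P hP
      rw [hdropcons] at hP
      rcases List.mem_cons.mp hP with rfl | hP'
      · exact le_rfl
      · exact hhead P hP'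
    have hdvd : (l.take (i : ℕ)).prod ∣ l.prod := by
      conv_rhs => rw [hsplit]
      rw [List.prod_append]
      exact dvd_mul_right _ _
    have hamem : (l.take (i : ℕ)).prod.natDegree ∈ degreeSet l.prod :=
      ⟨(l.take (i : ℕ)).prod, htpm, hdvd, rfl⟩
    have hsum : l.prod.natDegree =
        (l.take (i : ℕ)).prod.natDegree + (l.drop (i : ℕ)).prod.natDegree := by
      conv_lhs => rw [hsplit]
      rw [List.prod_append, htpm.natDegree_mul hdpm]
    have hdle : d ≤ (l.drop (i : ℕ)).prod.natDegree := by
      rw [hdropcons, List.prod_cons,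
        (hmonic _ (l.get_mem i)).natDegree_mul
          (monic_list_prod' fun P hP => hmonic P ((List.drop_sublist _ l).subset hP))]
      exact Nat.le_add_right _ _
    obtain ⟨b, hbA, hab, hbm⟩ := h _ hamem (by omega)
    have := smallBig' (l.take (i : ℕ)) htake_m d (l.drop (i : ℕ)) hdrop_m hdrop_i hdge b
      (by rwa [← hsplit])
    omega
  · intro h
    exact noGaps_of_cond' m l hmonic hirr h
end
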